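/- (Poisson approximation for colored balls into bins, event form.) Fix integers n ≥ 1, k ≥ 1 and h_1,…,h_k ≥ 1. Let X_{u,i} be the number of color-i balls in bin u when, for each i, h_i balls of color i are thrown independently and uniformly at random into n bins (all throws mutually independent), and let Y_{u,i} be mutually independent Poisson(h_i/n) random variables. Then for every set A of count-configurations (i.e., every set of functions from {1,…,n}×{1,…,k} to ℕ), Pr((X_{u,i})_{u,i} ∈ A) ≤ e^k·√(∏_{i=1}^k h_i)·Pr((Y_{u,i})_{u,i} ∈ A). -/

import Mathlib

open MeasureTheory ProbabilityTheory
open scoped BigOperators ENNReal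



open Finset in
lemma pae_stirling (m : ℕ) (hm : 1 ≤ m) :
    (m.factorial : ℝ) ≤ Real.exp 1 * Real.sqrt m * ((m : ℝ) / Real.exp 1) ^ m := by
  obtain ⟨j, rfl⟩ := Nat.exists_eq_add_of_le hm
  set m := 1 + j with hmj
  have hpos : (0:ℝ) < Real.sqrt (2 * m) * ((m : ℝ) / Real.exp 1) ^ m := by
    have : (0:ℝ) < (m:ℝ) := by positivity
    positivity
  have hs : Stirling.stirlingSeq m ≤ Stirling.stirlingSeq 1 := by
    have h0 : Stirling.stirlingSeq m = Stirling.stirlingSeq (Nat.succ j) := by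
      rw [hmj, Nat.succ_eq_add_one, Nat.add_comm]
    have h1 : Real.log (Stirling.stirlingSeq (Nat.succ j)) ≤
        Real.log (Stirling.stirlingSeq (Nat.succ 0)) :=
      Stirling.log_stirlingSeq'_antitone (Nat.zero_le j)
    have hpos1 : 0 < Stirling.stirlingSeq (Nat.succ j) := Stirling.stirlingSeq'_pos j
    have hpos2 : 0 < Stirling.stirlingSeq (Nat.succ 0) := Stirling.stirlingSeq'_pos 0
    rw [h0]
    exact (Real.log_le_log_iff hpos1 hpos2).mp h1
  have hdef : Stirling.stirlingSeq m =
      (m.factorial : ℝ) / (Real.sqrt (2 * m) * ((m : ℝ) / Real.exp 1) ^ m) := rfl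
  rw [Stirling.stirlingSeq_one, hdef, div_le_div_iff₀ hpos (by positivity)] at hs
  calc (m.factorial : ℝ) ≤ Real.exp 1 * (Real.sqrt (2*m) * ((m:ℝ)/Real.exp 1)^m) / Real.sqrt 2 := by
        rw [le_div_iff₀ (by positivity : (0:ℝ) < Real.sqrt 2)]; exact hs
    _ = Real.exp 1 * Real.sqrt m * ((m : ℝ) / Real.exp 1) ^ m := by
        rw [show (2:ℝ) * m = 2 * m from rfl, Real.sqrt_mul (by norm_num) (m:ℝ)]
        field_simp

open Finset in
lemma pae_real (m n : ℕ) (hm : 1 ≤ m) (hn : 1 ≤ n) (b : Fin n → ℕ) (hb : ∑ u, b u = m)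
    (c : ℕ) (hc : c * ∏ u, (b u).factorial ≤ m.factorial) :
    (c : ℝ) * ((n:ℝ)⁻¹)^m ≤ Real.exp 1 * Real.sqrt m *
      ∏ u, (Real.exp (-((m:ℝ)/n)) * ((m:ℝ)/n)^(b u) / (b u).factorial) := by
  have hn0 : (0:ℝ) < n := by positivity
  have hm0 : (0:ℝ) < m := by exact_mod_cast hm
  set Pf : ℝ := ∏ u, ((b u).factorial : ℝ) with hPf
  have hPfpos : 0 < Pf := Finset.prod_pos fun u _ => by positivity
  have h1 : ∏ u, (Real.exp (-((m:ℝ)/n)) * ((m:ℝ)/n)^(b u) / (b u).factorial)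
      = Real.exp (-(m:ℝ)) * ((m:ℝ)/n)^m / Pf := by
    rw [Finset.prod_div_distrib, Finset.prod_mul_distrib, Finset.prod_const,
      Finset.prod_pow_eq_pow_sum, hb, card_univ, Fintype.card_fin, ← Real.exp_nat_mul]
    congr 3
    field_simp
  rw [h1, mul_div_assoc' (Real.exp 1 * Real.sqrt m), le_div_iff₀ hPfpos]
  have h2 : ((m:ℝ)/n)^m = (m:ℝ)^m * ((n:ℝ)⁻¹)^m := by
    rw [div_pow, div_eq_mul_inv, inv_pow]
  have h3 : (c : ℝ) * Pf ≤ Real.exp 1 * Real.sqrt m * (Real.exp (-(m:ℝ)) * (m:ℝ)^m) := by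
    have hcr : (c : ℝ) * Pf ≤ (m.factorial : ℝ) := by rw [hPf]; exact_mod_cast hc
    refine hcr.trans ((pae_stirling m hm).trans_eq ?_)
    rw [div_pow, Real.exp_neg, ← Real.exp_one_pow]
    field_simp
  calc (c : ℝ) * ((n:ℝ)⁻¹)^m * Pf
      = ((c:ℝ) * Pf) * ((n:ℝ)⁻¹)^m := by ring
    _ ≤ (Real.exp 1 * Real.sqrt m * (Real.exp (-(m:ℝ)) * (m:ℝ)^m)) * ((n:ℝ)⁻¹)^m := by
        apply mul_le_mul_of_nonneg_right h3 (by positivity)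
    _ = Real.exp 1 * Real.sqrt m * (Real.exp (-(m:ℝ)) * ((m:ℝ)/n)^m) := by
        rw [h2]; ring

open Finset in
lemma pae_count (H N : ℕ) (a : Fin N → ℕ) (hs : ∑ u, a u = H) :
    Fintype.card {f : Fin H → Fin N // ∀ u,
        (Finset.univ.filter fun j => f j = u).card = a u} * ∏ u, (a u).factorial
      ≤ H.factorial := by
  classical
  set P : (Fin H → Fin N) → Prop :=
    fun f => ∀ u, (Finset.univ.filter fun j => f j = u).card = a u with hP
  have hcard : ∀ (f : {f : Fin H → Fin N // P f}) (u : Fin N),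
      Fintype.card {j : Fin H // f.1 j = u} = a u := by
    intro f u
    rw [Fintype.card_subtype]
    exact f.2 u
  let e : ∀ (f : {f : Fin H → Fin N // P f}) (u : Fin N),
      {j : Fin H // f.1 j = u} ≃ Fin (a u) :=
    fun f u => Fintype.equivFinOfCardEq (hcard f u)
  -- the val-trick: change the fiber index proof without HEq
  have hval : ∀ (f : {f : Fin H → Fin N // P f}) (σ : ∀ u, Equiv.Perm (Fin (a u)))
      (j : Fin H) (u : Fin N) (hju : f.1 j = u),
      ((σ (f.1 j)) (e f (f.1 j) ⟨j, rfl⟩)).val = ((σ u) (e f u ⟨j, hju⟩)).val := by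
    intro f σ j u hju
    subst hju
    rfl
  have key : Fintype.card ({f : Fin H → Fin N // P f} × ∀ u, Equiv.Perm (Fin (a u)))
      ≤ Fintype.card (Fin H ↪ Σ u : Fin N, Fin (a u)) := by
    let Φ : ({f : Fin H → Fin N // P f} × ∀ u, Equiv.Perm (Fin (a u))) →
        (Fin H ↪ Σ u : Fin N, Fin (a u)) := by
      rintro ⟨f, σ⟩
      refine ⟨fun j => ⟨f.1 j, σ (f.1 j) (e f (f.1 j) ⟨j, rfl⟩)⟩, ?_⟩
      intro j j' hjj'
      have h1 : f.1 j = f.1 j' := congrArg Sigma.fst hjj'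
      have h2 : ((σ (f.1 j)) (e f (f.1 j) ⟨j, rfl⟩)).val
          = ((σ (f.1 j')) (e f (f.1 j') ⟨j', rfl⟩)).val :=
        congrArg (fun z : Σ u : Fin N, Fin (a u) => (z.2 : ℕ)) hjj'
      rw [hval f σ j (f.1 j') h1] at h2
      have h3 : (σ (f.1 j')) (e f (f.1 j') ⟨j, h1⟩) = (σ (f.1 j')) (e f (f.1 j') ⟨j', rfl⟩) :=
        Fin.val_injective h2
      have h4 := (e f (f.1 j')).injective ((σ (f.1 j')).injective h3)
      exact congrArg Subtype.val h4
    refine Fintype.card_le_of_injective Φ ?_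
    rintro ⟨f, σ⟩ ⟨g, τ⟩ hfg
    have happ : ∀ j, (Φ (f, σ)) j = (Φ (g, τ)) j := fun j => congrFun (congrArg _ hfg) j
    have hf : f = g := by
      apply Subtype.ext; funext j
      exact congrArg Sigma.fst (happ j)
    subst hf
    have hσ : σ = τ := by
      funext u
      apply Equiv.ext
      intro x
      set j : Fin H := ((e f u).symm x).1 with hj
      have hju : f.1 j = u := ((e f u).symm x).2
      have hex : e f u ⟨j, hju⟩ = x := by
        have : (⟨j, hju⟩ : {j : Fin H // f.1 j = u}) = (e f u).symm x := Subtype.ext rfl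
        rw [this]
        exact (e f u).apply_symm_apply x
      have h2 : ((σ (f.1 j)) (e f (f.1 j) ⟨j, rfl⟩)).val
          = ((τ (f.1 j)) (e f (f.1 j) ⟨j, rfl⟩)).val :=
        congrArg (fun z : Σ u : Fin N, Fin (a u) => (z.2 : ℕ)) (happ j)
      rw [hval f σ j u hju, hval f τ j u hju, hex] at h2
      exact Fin.val_injective h2
    rw [hσ]
  rw [Fintype.card_prod, Fintype.card_pi, Fintype.card_embedding_eq] at key
  simp only [Fintype.card_perm, Fintype.card_fin] at key
  have hc : Fintype.card (Σ u : Fin N, Fin (a u)) = H := by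
    simp [Fintype.card_sigma, hs]
  rw [hc, Nat.descFactorial_self] at key
  exact key

open Finset in
lemma pae_sqrt_prod {ι : Type*} (s : Finset ι) (f : ι → ℝ) (hf : ∀ i ∈ s, 0 ≤ f i) :
    Real.sqrt (∏ i ∈ s, f i) = ∏ i ∈ s, Real.sqrt (f i) := by
  induction s using Finset.cons_induction with
  | empty => simp
  | cons i s hi ih =>
    rw [prod_cons, prod_cons, Real.sqrt_mul (hf i (mem_cons_self i s)),
      ih fun j hj => hf j (mem_cons_of_mem hj)]

open Finset in
/-- **Poisson approximation for colored balls into bins (event form).**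
For each color `i ∈ {1,…,k}`, `h i` balls of color `i` are thrown independently
and uniformly at random into `n` bins (`B b` is the bin of ball `b`, all throws
mutually independent), and `X u i` counts the color-`i` balls in bin `u`; the
`Y u i` are mutually independent `Poisson(h i / n)` variables. Then for every
set `A` of count-configurations,
`Pr(X ∈ A) ≤ e^k √(∏ i, h i) Pr(Y ∈ A)`. -/
theorem poisson_approximation_event
    (n k : ℕ) (hn : 1 ≤ n) (hk : 1 ≤ k) (h : Fin k → ℕ) (hh : ∀ i, 1 ≤ h i)
    {Ω : Type} [MeasurableSpace Ω] (μ : Measure Ω) [IsProbabilityMeasure μ]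
    (B : (Σ i : Fin k, Fin (h i)) → Ω → Fin n)
    (Y : Fin n → Fin k → Ω → ℕ)
    (hBmeas : ∀ b, Measurable (B b))
    (hYmeas : ∀ u i, Measurable (Y u i))
    (hBunif : ∀ b v, μ {ω | B b ω = v} = (n : ℝ≥0∞)⁻¹)
    (hBindep : iIndepFun B μ)
    (hYpois : ∀ u i a, μ {ω | Y u i ω = a} =
      ENNReal.ofReal (Real.exp (-((h i : ℝ) / n)) * ((h i : ℝ) / n) ^ a / a.factorial))
    (hYindep : iIndepFun
      (fun ui : Fin n × Fin k => Y ui.1 ui.2) μ)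
    (X : Fin n → Fin k → Ω → ℕ)
    (hX : ∀ u i ω, X u i ω =
      (Finset.univ.filter fun b : Fin (h i) => B ⟨i, b⟩ ω = u).card)
    (A : Set (Fin n → Fin k → ℕ)) :
    μ {ω | (fun u i => X u i ω) ∈ A}
      ≤ ENNReal.ofReal (Real.exp k * Real.sqrt (∏ i, (h i : ℝ))) *
        μ {ω | (fun u i => Y u i ω) ∈ A} := by
  classical
  set C : ℝ≥0∞ := ENNReal.ofReal (Real.exp k * Real.sqrt (∏ i, (h i : ℝ))) with hC
  -- pointwise bound
  have key : ∀ a : Fin n → Fin k → ℕ,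
      μ {ω | (fun u i => X u i ω) = a} ≤ C * μ {ω | (fun u i => Y u i ω) = a} := by
    intro a
    by_cases hsum : ∀ i, ∑ u, a u i = h i
    · -- Y side: exact product formula
      have hYmeas' : ∀ p : Fin n × Fin k,
          MeasurableSet[MeasurableSpace.comap (fun ω => Y p.1 p.2 ω) inferInstance]
            ((fun ω => Y p.1 p.2 ω) ⁻¹' {a p.1 p.2}) :=
        fun p => ⟨{a p.1 p.2}, measurableSet_singleton _, rfl⟩
      have hYa : μ {ω | (fun u i => Y u i ω) = a}
          = ∏ p : Fin n × Fin k, ENNReal.ofReal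
              (Real.exp (-((h p.2 : ℝ) / n)) * ((h p.2 : ℝ) / n) ^ (a p.1 p.2)
                / (a p.1 p.2).factorial) := by
        have hset : {ω | (fun u i => Y u i ω) = a}
            = ⋂ p : Fin n × Fin k, (fun ω => Y p.1 p.2 ω) ⁻¹' {a p.1 p.2} := by
          ext ω
          simp only [Set.mem_setOf_eq, Set.mem_iInter, Set.mem_preimage,
            Set.mem_singleton_iff, funext_iff, Prod.forall]
        rw [hset, hYindep.meas_iInter hYmeas']
        refine Finset.prod_congr rfl fun p _ => ?_
        have : (fun ω => Y p.1 p.2 ω) ⁻¹' {a p.1 p.2} = {ω | Y p.1 p.2 ω = a p.1 p.2} := by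
          ext ω; simp
        rw [this, hYpois]
      -- X side
      set T : Fin k → Type := fun i => {g : Fin (h i) → Fin n // ∀ u,
          (Finset.univ.filter fun b => g b = u).card = a u i} with hT
      set TT : Type := {g : ((Σ i : Fin k, Fin (h i)) → Fin n) // ∀ u i,
          (Finset.univ.filter fun b : Fin (h i) => g ⟨i, b⟩ = u).card = a u i} with hTT
      have hXsub2 : {ω | (fun u i => X u i ω) = a}
          ⊆ ⋃ g : TT, ⋂ b, {ω | B b ω = g.1 b} := by
        intro ω hω
        refine Set.mem_iUnion.mpr ⟨⟨fun b => B b ω, fun u i => ?_⟩, ?_⟩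
        · have h1 : X u i ω = a u i := by
            have := congrFun (congrFun (hω : (fun u i => X u i ω) = a) u) i
            exact this
          rw [hX] at h1
          exact h1
        · simp only [Set.mem_iInter, Set.mem_setOf_eq]
          intro b; trivial
      have hBprod : ∀ g : TT, μ (⋂ b, {ω | B b ω = g.1 b})
          = ((n : ℝ≥0∞)⁻¹) ^ (∑ i, h i) := by
        intro g
        have hBm : ∀ b : (Σ i : Fin k, Fin (h i)),
            MeasurableSet[MeasurableSpace.comap (B b) inferInstance]
              {ω | B b ω = g.1 b} := by
          intro b
          refine ⟨{g.1 b}, measurableSet_singleton _, ?_⟩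
          ext ω; simp
        rw [hBindep.meas_iInter hBm]
        have : ∀ b : (Σ i : Fin k, Fin (h i)), μ {ω | B b ω = g.1 b} = (n : ℝ≥0∞)⁻¹ :=
          fun b => hBunif b (g.1 b)
        rw [Finset.prod_congr rfl fun b _ => this b, Finset.prod_const, card_univ]
        congr 1
        simp
      have hXa : μ {ω | (fun u i => X u i ω) = a}
          ≤ (Fintype.card TT : ℝ≥0∞) * ((n : ℝ≥0∞)⁻¹) ^ (∑ i, h i) := by
        refine (measure_mono hXsub2).trans ?_
        refine (measure_iUnion_le _).trans_eq ?_
        rw [tsum_fintype]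
        rw [Finset.sum_congr rfl fun g _ => hBprod g, Finset.sum_const, card_univ,
          nsmul_eq_mul]
      -- factor the count
      have hTTcard : Fintype.card TT = ∏ i, Fintype.card (T i) := by
        rw [← Fintype.card_pi]
        refine Fintype.card_congr ?_
        exact
          { toFun := fun g i => ⟨fun b => g.1 ⟨i, b⟩, fun u => g.2 u i⟩
            invFun := fun t => ⟨fun b => (t b.1).1 b.2, fun u i => (t i).2 u⟩
            left_inv := fun g => Subtype.ext (funext fun b => by cases b; rfl)
            right_inv := fun t => funext fun i => Subtype.ext rfl }
      have hcount : ∀ i, Fintype.card (T i) * ∏ u, (a u i).factorial ≤ (h i).factorial :=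
        fun i => pae_count (h i) n (fun u => a u i) (hsum i)
      -- numeric comparison
      have hnum : (Fintype.card TT : ℝ≥0∞) * ((n : ℝ≥0∞)⁻¹) ^ (∑ i, h i)
          ≤ C * ∏ p : Fin n × Fin k, ENNReal.ofReal
              (Real.exp (-((h p.2 : ℝ) / n)) * ((h p.2 : ℝ) / n) ^ (a p.1 p.2)
                / (a p.1 p.2).factorial) := by
        have hfac_nonneg : ∀ p : Fin n × Fin k, 0 ≤
            Real.exp (-((h p.2 : ℝ) / n)) * ((h p.2 : ℝ) / n) ^ (a p.1 p.2)
              / (a p.1 p.2).factorial := by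
          intro p; positivity
        have hCr : 0 ≤ Real.exp k * Real.sqrt (∏ i, (h i : ℝ)) := by positivity
        have hn0 : (0:ℝ) < n := by positivity
        have lhs_eq : (Fintype.card TT : ℝ≥0∞) * ((n : ℝ≥0∞)⁻¹) ^ (∑ i, h i)
            = ENNReal.ofReal ((Fintype.card TT : ℝ) * (((n:ℝ)⁻¹) ^ (∑ i, h i))) := by
          rw [ENNReal.ofReal_mul (by positivity), ENNReal.ofReal_pow (by positivity),
            ENNReal.ofReal_inv_of_pos hn0, ENNReal.ofReal_natCast, ENNReal.ofReal_natCast]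
        have rhs_eq : C * ∏ p : Fin n × Fin k, ENNReal.ofReal
              (Real.exp (-((h p.2 : ℝ) / n)) * ((h p.2 : ℝ) / n) ^ (a p.1 p.2)
                / (a p.1 p.2).factorial)
            = ENNReal.ofReal ((Real.exp k * Real.sqrt (∏ i, (h i : ℝ))) *
                ∏ p : Fin n × Fin k,
                  (Real.exp (-((h p.2 : ℝ) / n)) * ((h p.2 : ℝ) / n) ^ (a p.1 p.2)
                    / (a p.1 p.2).factorial)) := by
          rw [ENNReal.ofReal_mul hCr, ENNReal.ofReal_prod_of_nonneg fun p _ => hfac_nonneg p,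
            hC]
        rw [lhs_eq, rhs_eq]
        apply ENNReal.ofReal_le_ofReal
        -- real inequality
        have hprod_split : (∏ p : Fin n × Fin k,
              (Real.exp (-((h p.2 : ℝ) / n)) * ((h p.2 : ℝ) / n) ^ (a p.1 p.2)
                / (a p.1 p.2).factorial))
            = ∏ i, ∏ u, (Real.exp (-((h i : ℝ) / n)) * ((h i : ℝ) / n) ^ (a u i)
                / (a u i).factorial) := by
          rw [Fintype.prod_prod_type]
          exact Finset.prod_comm
        rw [hprod_split]
        have hexp : Real.exp (k : ℝ) = ∏ _i : Fin k, Real.exp 1 := by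
          rw [Finset.prod_const, card_univ, Fintype.card_fin, Real.exp_one_pow]
        have hsqrt : Real.sqrt (∏ i, (h i : ℝ)) = ∏ i, Real.sqrt (h i) :=
          pae_sqrt_prod _ _ fun i _ => by positivity
        have hlhs : (Fintype.card TT : ℝ) * (((n:ℝ)⁻¹) ^ (∑ i, h i))
            = ∏ i, ((Fintype.card (T i) : ℝ) * ((n:ℝ)⁻¹) ^ (h i)) := by
          rw [Finset.prod_mul_distrib, Finset.prod_pow_eq_pow_sum, hTTcard]
          push_cast
          ring
        rw [hlhs, hexp, hsqrt]
        have hrhs : (∏ _i : Fin k, Real.exp 1) * (∏ i, Real.sqrt (h i)) *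
              ∏ i, ∏ u, (Real.exp (-((h i : ℝ) / n)) * ((h i : ℝ) / n) ^ (a u i)
                / (a u i).factorial)
            = ∏ i, (Real.exp 1 * Real.sqrt (h i) *
                ∏ u, (Real.exp (-((h i : ℝ) / n)) * ((h i : ℝ) / n) ^ (a u i)
                  / (a u i).factorial)) := by
          rw [Finset.prod_mul_distrib, Finset.prod_mul_distrib]
        rw [hrhs]
        refine Finset.prod_le_prod (fun i _ => by positivity) fun i _ => ?_
        exact pae_real (h i) n (hh i) hn (fun u => a u i) (hsum i)
          (Fintype.card (T i)) (hcount i)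
      calc μ {ω | (fun u i => X u i ω) = a}
          ≤ (Fintype.card TT : ℝ≥0∞) * ((n : ℝ≥0∞)⁻¹) ^ (∑ i, h i) := hXa
        _ ≤ C * ∏ p : Fin n × Fin k, ENNReal.ofReal
              (Real.exp (-((h p.2 : ℝ) / n)) * ((h p.2 : ℝ) / n) ^ (a p.1 p.2)
                / (a p.1 p.2).factorial) := hnum
        _ = C * μ {ω | (fun u i => Y u i ω) = a} := by rw [hYa]
    · -- impossible configuration
      have hempty : {ω | (fun u i => X u i ω) = a} = ∅ := by
        ext ω
        simp only [Set.mem_setOf_eq, Set.mem_empty_iff_false, iff_false]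
        intro hω
        apply hsum
        intro i
        have ha : ∀ u, a u i = (Finset.univ.filter
            fun b : Fin (h i) => B ⟨i, b⟩ ω = u).card := by
          intro u
          rw [← hX, congrFun (congrFun hω u) i]
        calc ∑ u, a u i
            = ∑ u, (Finset.univ.filter fun b : Fin (h i) => B ⟨i, b⟩ ω = u).card :=
              Finset.sum_congr rfl fun u _ => ha u
          _ = (Finset.univ : Finset (Fin (h i))).card :=
              (Finset.card_eq_sum_card_fiberwise fun b _ => Finset.mem_univ _).symm
          _ = h i := by simp
      rw [hempty]
      simp
  -- assemble via countable decomposition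
  have hXset : {ω | (fun u i => X u i ω) ∈ A}
      = ⋃ a ∈ A, {ω | (fun u i => X u i ω) = a} := by
    ext ω; simp
  have hYset : {ω | (fun u i => Y u i ω) ∈ A}
      = ⋃ a ∈ A, {ω | (fun u i => Y u i ω) = a} := by
    ext ω; simp
  have hYm : Measurable (fun ω => (fun u i => Y u i ω)) :=
    measurable_pi_lambda _ fun u => measurable_pi_lambda _ fun i => hYmeas u i
  have hmeasY : ∀ a ∈ A, MeasurableSet {ω | (fun u i => Y u i ω) = a} := by
    intro a _
    have : {ω | (fun u i => Y u i ω) = a}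
        = (fun ω => (fun u i => Y u i ω)) ⁻¹' {a} := by
      ext ω; simp
    rw [this]
    exact hYm (measurableSet_singleton a)
  have hdisj : A.PairwiseDisjoint fun a => {ω | (fun u i => Y u i ω) = a} := by
    intro a _ b _ hab
    refine Set.disjoint_left.mpr fun ω hωa hωb => hab ?_
    rw [← hωa, ← hωb]
  calc μ {ω | (fun u i => X u i ω) ∈ A}
      ≤ ∑' a : A, μ {ω | (fun u i => X u i ω) = (a : Fin n → Fin k → ℕ)} := by
        rw [hXset]
        exact measure_biUnion_le μ (Set.to_countable A) _
    _ ≤ ∑' a : A, C * μ {ω | (fun u i => Y u i ω) = (a : Fin n → Fin k → ℕ)} :=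
        ENNReal.tsum_le_tsum fun a => key a
    _ = C * ∑' a : A, μ {ω | (fun u i => Y u i ω) = (a : Fin n → Fin k → ℕ)} :=
        ENNReal.tsum_mul_left
    _ = C * μ {ω | (fun u i => Y u i ω) ∈ A} := by
        rw [hYset, measure_biUnion (Set.to_countable A) hdisj hmeasY]
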